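/- Let V be a torsion-free N-module that is generated in degrees ≤ n with respect to the sup norm. Then V admits a resolution ⋯ → P² → P¹ → P⁰ → V → 0 in which every term P^j is a (possibly infinite) direct sum of modules P(y) with y of sup norm ≤ n. (Equivalently, hd_s(V) ≤ gd(V) for all s ≥ 0.) -/

import Mathlib

open CategoryTheory CategoryTheory.Limits

/-- The poset `ℕ →₀ ℕ` of finitely supported sequences of naturals, with pointwise order,
regarded as a thin category. -/
abbrev NPoset := ℕ →₀ ℕ

/-- The sup norm of `x : ℕ →₀ ℕ` is `max_i x i`. -/
noncomputable def supNorm (x : NPoset) : ℕ := x.support.sup x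

/-- `P x` is the `k`-linearization of the representable functor `N(x, -)`. -/
noncomputable def Pmod (k : Type) [CommRing k] (x : NPoset) : NPoset ⥤ ModuleCat k :=
  coyoneda.obj (Opposite.op x) ⋙ ModuleCat.free k

/-- `Q` is a (possibly infinite) direct sum of modules `P y` with `y ∈ S`. -/
def IsDirectSumOfP (k : Type) [CommRing k] (Q : NPoset ⥤ ModuleCat k) (S : Set NPoset) : Prop :=
  ∃ (ι : Type) (g : ι → NPoset) (_ : ∀ j, g j ∈ S)
    (incl : ∀ j, Pmod k (g j) ⟶ Q), Nonempty (IsColimit (Cofan.mk Q incl))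

/-- `V` is generated in degrees `≤ n` with respect to a norm. -/
def GeneratedInDeg {k : Type} [CommRing k] (norm : NPoset → ℕ)
    (V : NPoset ⥤ ModuleCat k) (n : ℕ) : Prop :=
  ∀ z : NPoset,
    (⨆ (y : NPoset) (h : y ≤ z) (_ : norm y ≤ n),
      LinearMap.range (V.map (homOfLE h)).hom) = ⊤

/-- `V` admits a resolution `⋯ → P² → P¹ → P⁰ → V → 0` in which every term belongs to the
class of functors cut out by the predicate `good`. -/
def HasResolutionBy {k : Type} [CommRing k] (V : NPoset ⥤ ModuleCat k)
    (good : ℕ → (NPoset ⥤ ModuleCat k) → Prop) : Prop :=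
  ∃ (P : ℕ → (NPoset ⥤ ModuleCat k)) (d : ∀ j : ℕ, P (j + 1) ⟶ P j) (p : P 0 ⟶ V),
    (∀ j, good j (P j)) ∧
    (∀ z : NPoset, Function.Surjective (p.app z)) ∧
    (∀ z : NPoset, Function.Exact ((d 0).app z) (p.app z)) ∧
    (∀ (j : ℕ) (z : NPoset), Function.Exact ((d (j + 1)).app z) ((d j).app z))

namespace Aux

variable {k : Type} [CommRing k]

lemma pmod_map_single {x z z' : NPoset} (h : z ⟶ z') (f : x ⟶ z) (b : k) :
    (Pmod k x).map h (Finsupp.single f b) = Finsupp.single (f ≫ h) b := by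
  show Finsupp.mapDomain _ _ = _
  rw [Finsupp.mapDomain_single]; rfl

section Cover
variable {ι : Type} (g : ι → NPoset)

/-- concrete direct sum of Pmod (g i) -/
noncomputable def CoverF : NPoset ⥤ ModuleCat k where
  obj z := ModuleCat.of k ((Σ i, (g i ⟶ z)) →₀ k)
  map {z z'} h := ModuleCat.ofHom (Finsupp.lmapDomain k k
    (fun p : Σ i, (g i ⟶ z) => (⟨p.1, p.2 ≫ h⟩ : Σ i, (g i ⟶ z'))))
  map_id z := by
    apply ModuleCat.hom_ext
    apply Finsupp.lhom_ext
    intro p b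
    show Finsupp.mapDomain _ _ = _
    rw [Finsupp.mapDomain_single]
    rfl
  map_comp {z z' z''} h h' := by
    apply ModuleCat.hom_ext
    apply Finsupp.lhom_ext
    intro p b
    show Finsupp.mapDomain _ _ = Finsupp.mapDomain _ (Finsupp.mapDomain _ _)
    simp [Finsupp.mapDomain_single]

lemma coverF_map_single {z z' : NPoset} (h : z ⟶ z') (p : Σ i, (g i ⟶ z)) (b : k) :
    (CoverF (k := k) g).map h (Finsupp.single p b) = Finsupp.single ⟨p.1, p.2 ≫ h⟩ b :=
  Finsupp.mapDomain_single


lemma natApp {F G : NPoset ⥤ ModuleCat k} (t : F ⟶ G) {z z' : NPoset} (h : z ⟶ z')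
    (x : F.obj z) : G.map h (t.app z x) = t.app z' (F.map h x) := by
  have := t.naturality h
  exact (congrArg (fun m : F.obj z ⟶ G.obj z' => m x) this).symm

lemma single_eq_smul {α : Type} (a : α) (b : k) :
    (Finsupp.single a b : α →₀ k) = b • Finsupp.single a 1 := by
  rw [Finsupp.smul_single, smul_eq_mul, mul_one]

lemma lift_single' {M : Type} [AddCommGroup M] [Module k M] {α : Type} (f : α → M) (a : α) :
    Finsupp.lift M k α f (Finsupp.single a 1) = f a := by
  simp

noncomputable def coverIncl (i : ι) : Pmod k (g i) ⟶ CoverF g where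
  app z := ModuleCat.ofHom (Finsupp.lmapDomain k k (fun f : g i ⟶ z => (⟨i, f⟩ : Σ i, (g i ⟶ z))))
  naturality z z' h := by
    apply ModuleCat.hom_ext
    apply Finsupp.lhom_ext
    intro f b
    show Finsupp.mapDomain _ ((Pmod k (g i)).map h (Finsupp.single f b)) =
      (CoverF g).map h (Finsupp.mapDomain _ (Finsupp.single f b))
    rw [pmod_map_single, Finsupp.mapDomain_single, Finsupp.mapDomain_single, coverF_map_single]

lemma coverIncl_app_single (i : ι) (z : NPoset) (f : g i ⟶ z) :
    (coverIncl (k := k) g i).app z (Finsupp.single f 1)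
      = Finsupp.single (⟨i, f⟩ : Σ i, (g i ⟶ z)) 1 := by
  show Finsupp.mapDomain _ _ = _
  rw [Finsupp.mapDomain_single]

noncomputable def coverDesc (c : Cofan (fun i => Pmod k (g i))) : CoverF g ⟶ c.pt where
  app z := ModuleCat.ofHom (Finsupp.lift (c.pt.obj z) k _
    (fun p : Σ i, (g i ⟶ z) => (c.inj p.1).app z (Finsupp.single p.2 1)))
  naturality z z' h := by
    apply ModuleCat.hom_ext
    apply Finsupp.lhom_ext'
    intro p
    apply LinearMap.ext_ring
    show (Finsupp.lift (c.pt.obj z') k _ _) (Finsupp.mapDomain _ (Finsupp.single p 1)) =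
      c.pt.map h ((Finsupp.lift (c.pt.obj z) k _ _) (Finsupp.single p 1))
    rw [Finsupp.mapDomain_single, lift_single', lift_single']
    exact ((natApp (c.inj p.1) h (Finsupp.single p.2 1)).trans
      (congrArg (fun v => (c.inj p.1).app z' v) (pmod_map_single (k := k) h p.2 1))).symm

lemma coverDesc_app_single (c : Cofan (fun i => Pmod k (g i))) (z : NPoset)
    (p : Σ i, (g i ⟶ z)) :
    (coverDesc g c).app z (Finsupp.single p 1) = (c.inj p.1).app z (Finsupp.single p.2 1) := by
  show (Finsupp.lift _ k _ _) _ = _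
  rw [lift_single']

lemma coverDesc_fac (c : Cofan (fun i => Pmod k (g i))) (i : ι) :
    coverIncl g i ≫ coverDesc g c = c.inj i := by
  ext z : 2
  apply ModuleCat.hom_ext
  apply Finsupp.lhom_ext'
  intro f
  apply LinearMap.ext_ring
  show (coverDesc g c).app z ((coverIncl g i).app z (Finsupp.single f 1)) = _
  rw [coverIncl_app_single, coverDesc_app_single]
  rfl

lemma coverDesc_uniq (c : Cofan (fun i => Pmod k (g i))) (m : CoverF g ⟶ c.pt)
    (hm : ∀ i, coverIncl g i ≫ m = c.inj i) : m = coverDesc g c := by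
  ext z : 2
  apply ModuleCat.hom_ext
  apply Finsupp.lhom_ext'
  intro p
  apply LinearMap.ext_ring
  show (m.app z) (Finsupp.single p 1) = (coverDesc g c).app z (Finsupp.single p 1)
  have h1 : (Finsupp.single p 1 : (Σ i, (g i ⟶ z)) →₀ k)
      = (coverIncl g p.1).app z (Finsupp.single p.2 1) := by
    rw [coverIncl_app_single]
  rw [h1]
  have e1 := congrArg (fun (t : Pmod k (g p.1) ⟶ c.pt) => t.app z (Finsupp.single p.2 1)) (hm p.1)
  have e2 := congrArg (fun (t : Pmod k (g p.1) ⟶ c.pt) => t.app z (Finsupp.single p.2 1))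
    (coverDesc_fac g c p.1)
  exact e1.trans e2.symm

noncomputable def coverIsColimit : IsColimit (Cofan.mk (CoverF (k := k) g) (coverIncl g)) :=
  mkCofanColimit _ (fun t => coverDesc g t) (fun t i => coverDesc_fac g t i)
    (fun t m hm => coverDesc_uniq g t m hm)

lemma coverF_map_injective {z z' : NPoset} (h : z ⟶ z') :
    Function.Injective ((CoverF (k := k) g).map h) := by
  apply Finsupp.mapDomain_injective
  rintro ⟨i, f⟩ ⟨i', f'⟩ he
  obtain rfl : i = i' := congrArg Sigma.fst he
  exact congrArg _ (Subsingleton.elim f f')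

lemma coverF_map_surjective {z z' : NPoset} (h : z ⟶ z')
    (hle : ∀ i, g i ≤ z' → g i ≤ z) :
    Function.Surjective ((CoverF (k := k) g).map h) := by
  have hs : Function.Surjective (fun p : Σ i, (g i ⟶ z) =>
      (⟨p.1, p.2 ≫ h⟩ : Σ i, (g i ⟶ z'))) := by
    rintro ⟨i, f⟩
    have : g i ≤ z := hle i (leOfHom f)
    exact ⟨⟨i, homOfLE this⟩, by
      refine congrArg _ (Subsingleton.elim _ _)⟩
  intro (u : (Σ i, (g i ⟶ z')) →₀ k)
  refine ⟨Finsupp.mapDomain (Function.surjInv hs) u, ?_⟩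
  show Finsupp.mapDomain _ (Finsupp.mapDomain _ u) = u
  rw [← Finsupp.mapDomain_comp]
  have : (fun p : Σ i, (g i ⟶ z) => (⟨p.1, p.2 ≫ h⟩ : Σ i, (g i ⟶ z')))
      ∘ (Function.surjInv hs) = id := by
    funext u; exact Function.surjInv_eq hs u
  rw [this, Finsupp.mapDomain_id]

end Cover

/-- truncation of z at n -/
noncomputable def trunc (n : ℕ) (z : NPoset) : NPoset :=
  Finsupp.mapRange (fun a => min a n) (Nat.zero_min n) z

lemma trunc_le (n : ℕ) (z : NPoset) : trunc n z ≤ z := by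
  intro i; simp [trunc, Finsupp.mapRange_apply]

lemma supNorm_trunc (n : ℕ) (z : NPoset) : supNorm (trunc n z) ≤ n := by
  apply Finset.sup_le
  intro i _
  simp [trunc, Finsupp.mapRange_apply]

lemma apply_le_supNorm (y : NPoset) (i : ℕ) : y i ≤ supNorm y := by
  by_cases h : y i = 0
  · simp [h]
  · exact Finset.le_sup (f := y) (Finsupp.mem_support_iff.mpr h)

lemma le_trunc {n : ℕ} {y z : NPoset} (h : y ≤ z) (hn : supNorm y ≤ n) : y ≤ trunc n z := by
  intro i
  simp only [trunc, Finsupp.mapRange_apply]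
  exact le_min (h i) ((apply_le_supNorm y i).trans hn)

section Ker
variable {F W : NPoset ⥤ ModuleCat k} (phi : F ⟶ W)

set_option synthInstance.maxHeartbeats 1000000 in
set_option maxHeartbeats 1000000 in
/-- kernel functor of a natural transformation -/
noncomputable def KerF : NPoset ⥤ ModuleCat k where
  obj z := ModuleCat.of k (LinearMap.ker (phi.app z).hom)
  map {z z'} h := ModuleCat.ofHom ((F.map h).hom.restrict (p := LinearMap.ker (phi.app z).hom)
    (q := LinearMap.ker (phi.app z').hom) (by
      intro x hx
      rw [LinearMap.mem_ker] at hx ⊢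
      rw [← natApp phi h x, hx, map_zero]))
  map_id z := by
    apply ModuleCat.hom_ext
    apply LinearMap.ext
    intro x
    apply Subtype.ext
    show F.map (𝟙 z) x.1 = x.1
    rw [F.map_id]
    rfl
  map_comp {z z' z''} h h' := by
    apply ModuleCat.hom_ext
    apply LinearMap.ext
    intro x
    apply Subtype.ext
    show F.map (h ≫ h') x.1 = F.map h' (F.map h x.1)
    rw [F.map_comp]
    rfl

noncomputable def kerIncl : KerF phi ⟶ F where
  app z := ModuleCat.ofHom (LinearMap.ker (phi.app z).hom).subtype
  naturality z z' h := rfl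

lemma kerIncl_injective (z : NPoset) : Function.Injective ((kerIncl phi).app z) :=
  Subtype.val_injective

lemma kerF_map_injective {z z' : NPoset} (h : z ⟶ z')
    (hF : Function.Injective (F.map h)) :
    Function.Injective ((KerF phi).map h) := by
  intro a b hab
  apply Subtype.ext
  apply hF
  exact congrArg Subtype.val hab

lemma range_kerIncl (z : NPoset) :
    LinearMap.range ((kerIncl phi).app z).hom = LinearMap.ker (phi.app z).hom :=
  Submodule.range_subtype _

end Ker

def GeneratedInDeg' (norm : NPoset → ℕ) (V : NPoset ⥤ ModuleCat k) (n : ℕ) : Prop :=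
  ∀ z : NPoset,
    (⨆ (y : NPoset) (h : y ≤ z) (_ : norm y ≤ n),
      LinearMap.range (V.map (homOfLE h)).hom) = ⊤

section CoverW
variable (n : ℕ) (W : NPoset ⥤ ModuleCat k)

def CoverI : Type := Σ y : {y : NPoset // supNorm y ≤ n}, W.obj y.1

def coverG : CoverI n W → NPoset := fun j => j.1.1

noncomputable abbrev CoverW : NPoset ⥤ ModuleCat k := CoverF (coverG n W)

noncomputable def coverPi : CoverW n W ⟶ W where
  app z := ModuleCat.ofHom (Finsupp.lift (W.obj z) k (Σ j : CoverI n W, (coverG n W j ⟶ z))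
    (fun p => W.map p.2 p.1.2))
  naturality z z' h := by
    apply ModuleCat.hom_ext
    apply Finsupp.lhom_ext'
    intro p
    apply LinearMap.ext_ring
    show (Finsupp.lift (W.obj z') k _ _) (Finsupp.mapDomain _ (Finsupp.single p 1)) =
      W.map h ((Finsupp.lift (W.obj z) k _ _) (Finsupp.single p 1))
    rw [Finsupp.mapDomain_single, lift_single', lift_single']
    show (W.map (p.2 ≫ h)) p.1.2 = _
    rw [W.map_comp]
    rfl

lemma coverPi_app_single (z : NPoset) (p : Σ j : CoverI n W, (coverG n W j ⟶ z)) :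
    (coverPi n W).app z (Finsupp.single p 1) = W.map p.2 p.1.2 := by
  show (Finsupp.lift _ k _ _) _ = _
  rw [lift_single']

lemma coverPi_surjective (hW : GeneratedInDeg' supNorm W n) (z : NPoset) :
    Function.Surjective ((coverPi n W).app z) := by
  rw [← LinearMap.range_eq_top, eq_top_iff, ← hW z]
  apply iSup_le; intro y
  apply iSup_le; intro hyz
  apply iSup_le; intro hn
  rintro w ⟨v, rfl⟩
  exact ⟨Finsupp.single ⟨⟨⟨y, hn⟩, v⟩, homOfLE hyz⟩ 1, coverPi_app_single n W z _⟩

lemma coverW_map_injective {z z' : NPoset} (h : z ⟶ z') :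
    Function.Injective ((CoverW n W).map h) :=
  coverF_map_injective _ h

lemma kerF_generated (hWtf : ∀ (x y : NPoset) (h : x ≤ y),
      Function.Injective (W.map (homOfLE h))) :
    GeneratedInDeg' supNorm (KerF (coverPi n W)) n := by
  intro z
  rw [eq_top_iff]
  rintro ξ -
  set z' := trunc n z with hz'
  have hz : z' ≤ z := trunc_le n z
  have hle : ∀ j, coverG n W j ≤ z → coverG n W j ≤ z' :=
    fun j hj => le_trunc hj j.1.2
  obtain ⟨x', hx'⟩ := coverF_map_surjective (coverG n W) (homOfLE hz)
    (fun j hj => hle j hj) ξ.1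
  have hker : x' ∈ LinearMap.ker ((coverPi n W).app z').hom := by
    rw [LinearMap.mem_ker]
    apply hWtf z' z hz
    rw [map_zero, natApp (coverPi n W) (homOfLE hz) x', hx']
    exact ξ.2
  refine Submodule.mem_iSup_of_mem z' (Submodule.mem_iSup_of_mem hz
    (Submodule.mem_iSup_of_mem (supNorm_trunc n z) ?_))
  refine ⟨⟨x', hker⟩, ?_⟩
  exact Subtype.ext hx'

end CoverW

section Seq
variable (V : NPoset ⥤ ModuleCat k) (n : ℕ)

noncomputable def Wseq : ℕ → (NPoset ⥤ ModuleCat k)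
  | 0 => V
  | j + 1 => KerF (coverPi n (Wseq j))

lemma wseq_tf (htf : ∀ (x y : NPoset) (h : x ≤ y), Function.Injective (V.map (homOfLE h))) :
    ∀ j (x y : NPoset) (h : x ≤ y), Function.Injective ((Wseq V n j).map (homOfLE h))
  | 0 => htf
  | j + 1 => fun x y h =>
      kerF_map_injective (coverPi n (Wseq V n j)) (homOfLE h)
        (coverW_map_injective n (Wseq V n j) (homOfLE h))

lemma wseq_gen (htf : ∀ (x y : NPoset) (h : x ≤ y), Function.Injective (V.map (homOfLE h)))
    (hV : GeneratedInDeg' supNorm V n) :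
    ∀ j, GeneratedInDeg' supNorm (Wseq V n j) n
  | 0 => hV
  | j + 1 => kerF_generated n (Wseq V n j) (wseq_tf V n htf j)

end Seq
end Aux

/-- A torsion-free `N`-module generated in degrees `≤ n` (sup norm) has a resolution all of whose
terms are direct sums of modules `P y` with `supNorm y ≤ n`. -/
theorem stmt2 {k : Type} [CommRing k] (V : NPoset ⥤ ModuleCat k) (n : ℕ)
    (htf : ∀ (x y : NPoset) (h : x ≤ y), Function.Injective (V.map (homOfLE h)))
    (hV : GeneratedInDeg supNorm V n) :
    HasResolutionBy V (fun _ Q => IsDirectSumOfP k Q {y | supNorm y ≤ n}) := by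
  classical
  refine ⟨fun j => Aux.CoverW n (Aux.Wseq V n j),
    fun j => Aux.coverPi n (Aux.Wseq V n (j+1)) ≫ Aux.kerIncl (Aux.coverPi n (Aux.Wseq V n j)),
    Aux.coverPi n (Aux.Wseq V n 0), ?_, ?_, ?_, ?_⟩
  · intro j
    exact ⟨Aux.CoverI n _, Aux.coverG n _, fun i => i.1.2, Aux.coverIncl _,
      ⟨Aux.coverIsColimit _⟩⟩
  · intro z
    exact Aux.coverPi_surjective n (Aux.Wseq V n 0) (Aux.wseq_gen V n htf hV 0) z
  all_goals {
    have hsurj : ∀ j z, Function.Surjective ((Aux.coverPi n (Aux.Wseq V n j)).app z).hom :=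
      fun j z => Aux.coverPi_surjective _ _ (Aux.wseq_gen V n htf hV j) z
    have hrange : ∀ (j : ℕ) (z : NPoset),
        LinearMap.range ((Aux.coverPi n (Aux.Wseq V n (j+1)) ≫
            Aux.kerIncl (Aux.coverPi n (Aux.Wseq V n j))).app z).hom
          = LinearMap.ker ((Aux.coverPi n (Aux.Wseq V n j)).app z).hom := by
      intro j z
      have e : ((Aux.coverPi n (Aux.Wseq V n (j+1)) ≫
            Aux.kerIncl (Aux.coverPi n (Aux.Wseq V n j))).app z).hom
          = ((Aux.kerIncl (Aux.coverPi n (Aux.Wseq V n j))).app z).hom.comp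
              ((Aux.coverPi n (Aux.Wseq V n (j+1))).app z).hom := rfl
      apply le_antisymm
      · rintro _ ⟨x, rfl⟩
        exact (((Aux.coverPi n (Aux.Wseq V n (j+1))).app z) x).2
      · intro y hy
        obtain ⟨x, hx⟩ := hsurj (j+1) z ⟨y, hy⟩
        exact ⟨x, congrArg Subtype.val hx⟩
    first
    | · intro z
        rw [LinearMap.exact_iff]
        exact (hrange 0 z).symm
    | · intro j z
        rw [LinearMap.exact_iff]
        have e2 : LinearMap.ker ((Aux.coverPi n (Aux.Wseq V n (j+1)) ≫
              Aux.kerIncl (Aux.coverPi n (Aux.Wseq V n j))).app z).hom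
            = LinearMap.ker ((Aux.coverPi n (Aux.Wseq V n (j+1))).app z).hom := by
          have e : ((Aux.coverPi n (Aux.Wseq V n (j+1)) ≫
                Aux.kerIncl (Aux.coverPi n (Aux.Wseq V n j))).app z).hom
              = ((Aux.kerIncl (Aux.coverPi n (Aux.Wseq V n j))).app z).hom.comp
                  ((Aux.coverPi n (Aux.Wseq V n (j+1))).app z).hom := rfl
          ext x
          simp only [LinearMap.mem_ker]
          exact ⟨fun h => Subtype.ext h, fun h => congrArg Subtype.val h⟩
        rw [e2]
        exact (hrange (j+1) z).symm
  }
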